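/- Let g₁, g₂ : ℝ² → ℝ be C² and nowhere zero, and consider the diagonal 2-dimensional metric g = diag(g₁, g₂) in coordinates (x¹, x²). Define the Christoffel coefficients L̂^i_{jk} = (1/2) g^{ir}(∂_k g_{jr} + ∂_j g_{kr} − ∂_r g_{jk}) and the Ricci tensor R̂_{hj} = ∂_k L̂^k_{hj} − ∂_j L̂^k_{hk} + L̂^m_{hj} L̂^k_{mk} − L̂^m_{hk} L̂^k_{mj}. Then R̂₁₁/g₁ = R̂₂₂/g₂ = −(1/(2 g₁ g₂)) [ g₂•• − (g₁• g₂•)/(2 g₁) − (g₂•)²/(2 g₂) + g₁″ − (g₁′ g₂′)/(2 g₂) − (g₁′)²/(2 g₁) ], where a• = ∂a/∂x¹ and a′ = ∂a/∂x². (This is the horizontal equation (eq1b) of the decoupling Theorem 2.6.) -/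

import Mathlib

/- STATEMENT 8 (horizontal equation (eq1b) of Theorem 2.6): for a diagonal 2-d
metric g = diag(g₁,g₂) in coordinates (x¹,x²), the Ricci tensor satisfies
R̂₁₁/g₁ = R̂₂₂/g₂ = −(1/(2g₁g₂))[g₂•• − g₁•g₂•/(2g₁) − (g₂•)²/(2g₂)
+ g₁″ − g₁′g₂′/(2g₂) − (g₁′)²/(2g₁)]. -/

noncomputable section

/-- Partial derivative `∂_k f` on ℝ². -/
def pd (k : Fin 2) (f : (Fin 2 → ℝ) → ℝ) (u : Fin 2 → ℝ) : ℝ :=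
  fderiv ℝ f u (Pi.single k 1)

/-- The diagonal metric `diag(g₁, g₂)`. -/
def gmat (g₁ g₂ : (Fin 2 → ℝ) → ℝ) (i j : Fin 2) (u : Fin 2 → ℝ) : ℝ :=
  if i = j then (if i = 0 then g₁ u else g₂ u) else 0

/-- The inverse metric `diag(1/g₁, 1/g₂)`. -/
def gmatInv (g₁ g₂ : (Fin 2 → ℝ) → ℝ) (i j : Fin 2) (u : Fin 2 → ℝ) : ℝ :=
  if i = j then (if i = 0 then (g₁ u)⁻¹ else (g₂ u)⁻¹) else 0

/-- Christoffel coefficients `L̂^i_{jk} = (1/2) g^{ir}(∂_k g_{jr} + ∂_j g_{kr} − ∂_r g_{jk})`. -/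
def Lhat (g₁ g₂ : (Fin 2 → ℝ) → ℝ) (i j k : Fin 2) (u : Fin 2 → ℝ) : ℝ :=
  (1/2) * ∑ r : Fin 2, gmatInv g₁ g₂ i r u *
    (pd k (gmat g₁ g₂ j r) u + pd j (gmat g₁ g₂ k r) u - pd r (gmat g₁ g₂ j k) u)

/-- Ricci tensor `R̂_{hj} = ∂_k L̂^k_{hj} − ∂_j L̂^k_{hk} + L̂^m_{hj} L̂^k_{mk} − L̂^m_{hk} L̂^k_{mj}`. -/
def Ric (g₁ g₂ : (Fin 2 → ℝ) → ℝ) (h j : Fin 2) (u : Fin 2 → ℝ) : ℝ :=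
  (∑ k : Fin 2, pd k (Lhat g₁ g₂ k h j) u)
    - pd j (fun v => ∑ k : Fin 2, Lhat g₁ g₂ k h k v) u
    + (∑ m : Fin 2, ∑ k : Fin 2, Lhat g₁ g₂ m h j u * Lhat g₁ g₂ k m k u)
    - ∑ m : Fin 2, ∑ k : Fin 2, Lhat g₁ g₂ m h k u * Lhat g₁ g₂ k m j u

section Helpers

variable {k m : Fin 2} {u : Fin 2 → ℝ} {f g x y : (Fin 2 → ℝ) → ℝ}

lemma pd_zero : pd k (fun _ => (0:ℝ)) u = 0 := by simp [pd]

lemma pd_neg : pd k (fun v => -f v) u = -pd k f u := by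
  simp [pd, fderiv_neg]

lemma pd_add (hf : DifferentiableAt ℝ f u) (hg : DifferentiableAt ℝ g u) :
    pd k (fun v => f v + g v) u = pd k f u + pd k g u := by
  simp [pd, fderiv_fun_add hf hg]

lemma pd_const_mul (c : ℝ) (hf : DifferentiableAt ℝ f u) :
    pd k (fun v => c * f v) u = c * pd k f u := by
  simp [pd, fderiv_const_mul hf]

lemma pd_div (hf : DifferentiableAt ℝ f u) (hg : DifferentiableAt ℝ g u) (h0 : g u ≠ 0) :
    pd k (fun v => f v / g v) u = (pd k f u * g u - f u * pd k g u) / (g u)^2 := by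
  have h1 : HasFDerivAt (fun v => (g v)⁻¹) ((-(g u ^ 2)⁻¹) • fderiv ℝ g u) u :=
    (hasDerivAt_inv h0).comp_hasFDerivAt u hg.hasFDerivAt
  have h2 : HasFDerivAt (fun v => f v * (g v)⁻¹)
      (f u • ((-(g u ^ 2)⁻¹) • fderiv ℝ g u) + (g u)⁻¹ • fderiv ℝ f u) u :=
    hf.hasFDerivAt.mul h1
  have : (fun v => f v / g v) = fun v => f v * (g v)⁻¹ := by
    funext v; rw [div_eq_mul_inv]
  rw [pd, this, h2.fderiv]
  simp only [ContinuousLinearMap.add_apply, ContinuousLinearMap.smul_apply, smul_eq_mul, pd]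
  field_simp
  ring

lemma differentiable_pd (h : ContDiff ℝ 2 f) : Differentiable ℝ (pd k f) := by
  have h1 : ContDiff ℝ 1 (fun v => fderiv ℝ f v) := h.fderiv_right (le_refl _)
  exact (h1.clm_apply contDiff_const).differentiable one_ne_zero

variable (a b : (Fin 2 → ℝ) → ℝ)

lemma gmat00 : gmat a b 0 0 = a := by funext v; simp [gmat]
lemma gmat11 : gmat a b 1 1 = b := by funext v; simp [gmat]
lemma gmat01 : gmat a b 0 1 = fun _ => 0 := by funext v; simp [gmat]
lemma gmat10 : gmat a b 1 0 = fun _ => 0 := by funext v; simp [gmat]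

lemma L000 : Lhat a b 0 0 0 = fun u => pd 0 a u / (2 * a u) := by
  funext v
  simp [Lhat, Fin.sum_univ_two, gmat00, gmat01, gmat10, gmat11, gmatInv, pd_zero]
  ring

lemma L001 : Lhat a b 0 0 1 = fun u => pd 1 a u / (2 * a u) := by
  funext v
  simp [Lhat, Fin.sum_univ_two, gmat00, gmat01, gmat10, gmat11, gmatInv, pd_zero]
  ring

lemma L010 : Lhat a b 0 1 0 = fun u => pd 1 a u / (2 * a u) := by
  funext v
  simp [Lhat, Fin.sum_univ_two, gmat00, gmat01, gmat10, gmat11, gmatInv, pd_zero]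
  ring

lemma L011 : Lhat a b 0 1 1 = fun u => -(pd 0 b u / (2 * a u)) := by
  funext v
  simp [Lhat, Fin.sum_univ_two, gmat00, gmat01, gmat10, gmat11, gmatInv, pd_zero]
  ring

lemma L100 : Lhat a b 1 0 0 = fun u => -(pd 1 a u / (2 * b u)) := by
  funext v
  simp [Lhat, Fin.sum_univ_two, gmat00, gmat01, gmat10, gmat11, gmatInv, pd_zero]
  ring

lemma L101 : Lhat a b 1 0 1 = fun u => pd 0 b u / (2 * b u) := by
  funext v
  simp [Lhat, Fin.sum_univ_two, gmat00, gmat01, gmat10, gmat11, gmatInv, pd_zero]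
  ring

lemma L110 : Lhat a b 1 1 0 = fun u => pd 0 b u / (2 * b u) := by
  funext v
  simp [Lhat, Fin.sum_univ_two, gmat00, gmat01, gmat10, gmat11, gmatInv, pd_zero]
  ring

lemma L111 : Lhat a b 1 1 1 = fun u => pd 1 b u / (2 * b u) := by
  funext v
  simp [Lhat, Fin.sum_univ_two, gmat00, gmat01, gmat10, gmat11, gmatInv, pd_zero]
  ring

lemma diffAt_chris (hx : ContDiff ℝ 2 x) (hy : ContDiff ℝ 2 y) (hy0 : y u ≠ 0) :
    DifferentiableAt ℝ (fun v => pd m x v / (2 * y v)) u := by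
  have h1 : DifferentiableAt ℝ (fun v => pd m x v) u := differentiable_pd hx u
  have h2 : DifferentiableAt ℝ (fun v => 2 * y v) u :=
    ((hy.differentiable (by norm_num)) u).const_mul 2
  have h4 : DifferentiableAt ℝ (fun v => (2 * y v)⁻¹) u := by
    refine h2.inv ?_
    simp [hy0]
  have h5 : (fun v => pd m x v / (2 * y v)) = fun v => pd m x v * (2 * y v)⁻¹ := by
    funext v; rw [div_eq_mul_inv]
  rw [h5]; exact h1.mul h4

lemma pd_chris (hx : ContDiff ℝ 2 x) (hy : ContDiff ℝ 2 y) (hy0 : y u ≠ 0) :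
    pd k (fun v => pd m x v / (2 * y v)) u
      = (pd k (pd m x) u * (2 * y u) - pd m x u * (2 * pd k y u)) / (2 * y u)^2 := by
  rw [pd_div (differentiable_pd hx u) (((hy.differentiable (by norm_num)) u).const_mul 2)
      (by simp [hy0]),
    pd_const_mul 2 ((hy.differentiable (by norm_num)) u)]

end Helpers

theorem horizontal_ricci_diagonal_2d
    (g₁ g₂ : (Fin 2 → ℝ) → ℝ)
    (hg₁ : ContDiff ℝ 2 g₁) (hg₂ : ContDiff ℝ 2 g₂)
    (hg₁0 : ∀ u, g₁ u ≠ 0) (hg₂0 : ∀ u, g₂ u ≠ 0) :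
    ∀ u : Fin 2 → ℝ,
      Ric g₁ g₂ 0 0 u / g₁ u
        = -(1 / (2 * g₁ u * g₂ u)) *
          (pd 0 (pd 0 g₂) u - pd 0 g₁ u * pd 0 g₂ u / (2 * g₁ u)
            - (pd 0 g₂ u) ^ 2 / (2 * g₂ u)
            + pd 1 (pd 1 g₁) u - pd 1 g₁ u * pd 1 g₂ u / (2 * g₂ u)
            - (pd 1 g₁ u) ^ 2 / (2 * g₁ u)) ∧
      Ric g₁ g₂ 1 1 u / g₂ u
        = -(1 / (2 * g₁ u * g₂ u)) *
          (pd 0 (pd 0 g₂) u - pd 0 g₁ u * pd 0 g₂ u / (2 * g₁ u)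
            - (pd 0 g₂ u) ^ 2 / (2 * g₂ u)
            + pd 1 (pd 1 g₁) u - pd 1 g₁ u * pd 1 g₂ u / (2 * g₂ u)
            - (pd 1 g₁ u) ^ 2 / (2 * g₁ u)) := by
  intro u
  constructor
  · simp only [Ric, Fin.sum_univ_two, L000, L001, L010, L011, L100, L101, L110, L111]
    rw [pd_add (diffAt_chris hg₁ hg₁ (hg₁0 u)) (diffAt_chris hg₂ hg₂ (hg₂0 u))]
    simp only [pd_neg]
    rw [pd_chris hg₁ hg₁ (hg₁0 u), pd_chris hg₁ hg₂ (hg₂0 u), pd_chris hg₂ hg₂ (hg₂0 u)]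
    have h1 := hg₁0 u; have h2 := hg₂0 u
    field_simp
    ring
  · simp only [Ric, Fin.sum_univ_two, L000, L001, L010, L011, L100, L101, L110, L111]
    rw [pd_add (diffAt_chris hg₁ hg₁ (hg₁0 u)) (diffAt_chris hg₂ hg₂ (hg₂0 u))]
    simp only [pd_neg]
    rw [pd_chris hg₂ hg₁ (hg₁0 u), pd_chris hg₁ hg₁ (hg₁0 u), pd_chris hg₂ hg₂ (hg₂0 u)]
    have h1 := hg₁0 u; have h2 := hg₂0 u
    field_simp
    ring


end
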